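/- Let T(A), Δ(A) = ‖A^{1/2}(μ₁-μ₂)‖², K₁(A) = 2Σᵢ tr(Σ_{i,A}²)/(nᵢ(nᵢ-1)) + 4tr(Σ_{1,A}Σ_{2,A})/(n₁n₂), and K₂(A) = 4Σᵢ μ_A^T Σ_{i,A} μ_A/nᵢ be as in the two-sample test. Then K₂(A) ≤ 8 Δ(A) √(K₁(A)); consequently K₁(A)/K₂(A) ≥ √(K₁(A))/(8Δ(A)). -/

import Mathlib

open Matrix Finset

open scoped ComplexOrder in
/-- The positive semidefinite square root of a positive semidefinite matrix
(the definition of `Matrix.PosSemidef.sqrt` from the older Mathlib, since removed). -/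
noncomputable def Matrix.PosSemidef.sqrt {n 𝕜 : Type*} [Fintype n] [RCLike 𝕜] [DecidableEq n]
    {A : Matrix n n 𝕜} (hA : A.PosSemidef) : Matrix n n 𝕜 :=
  hA.1.eigenvectorUnitary.1 * diagonal ((↑) ∘ Real.sqrt ∘ hA.1.eigenvalues) *
  (star hA.1.eigenvectorUnitary : Matrix n n 𝕜)

open scoped ComplexOrder in
lemma Matrix.PosSemidef.posSemidef_sqrt {n 𝕜 : Type*} [Fintype n] [RCLike 𝕜] [DecidableEq n]
    {A : Matrix n n 𝕜} (hA : A.PosSemidef) : hA.sqrt.PosSemidef := by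
  rw [Matrix.PosSemidef.sqrt, Matrix.star_eq_conjTranspose]
  apply PosSemidef.mul_mul_conjTranspose_same
  rw [posSemidef_diagonal_iff]
  intro i
  exact RCLike.ofReal_nonneg.mpr (Real.sqrt_nonneg _)

open scoped ComplexOrder in
lemma Matrix.PosSemidef.sqrt_mul_self {n 𝕜 : Type*} [Fintype n] [RCLike 𝕜] [DecidableEq n]
    {A : Matrix n n 𝕜} (hA : A.PosSemidef) : hA.sqrt * hA.sqrt = A := by
  have hU := Unitary.coe_star_mul_self hA.1.eigenvectorUnitary
  have hD : diagonal (((↑) ∘ Real.sqrt ∘ hA.1.eigenvalues : n → 𝕜)) *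
      diagonal ((↑) ∘ Real.sqrt ∘ hA.1.eigenvalues) =
      diagonal (RCLike.ofReal ∘ hA.1.eigenvalues : n → 𝕜) := by
    rw [diagonal_mul_diagonal]; congr 1; funext i
    simp only [Function.comp]
    rw [← RCLike.ofReal_mul, Real.mul_self_sqrt (hA.eigenvalues_nonneg i)]
  conv_rhs => rw [hA.1.spectral_theorem, Unitary.conjStarAlgAut_apply]
  rw [Matrix.PosSemidef.sqrt]
  simp only [Matrix.mul_assoc]
  rw [← Matrix.mul_assoc (star _) _ (diagonal _ * _), hU, Matrix.one_mul,
    ← Matrix.mul_assoc (diagonal _) (diagonal _), hD]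

lemma dot_psd_nonneg {p : ℕ} {S : Matrix (Fin p) (Fin p) ℝ} (hS : S.PosSemidef)
    (μ : Fin p → ℝ) : 0 ≤ μ ⬝ᵥ (S *ᵥ μ) := by
  have := hS.dotProduct_mulVec_nonneg μ
  simpa using this

lemma trace_sq_eq {p : ℕ} {S : Matrix (Fin p) (Fin p) ℝ} (hS : S.IsHermitian) :
    (S * S).trace = ∑ q : Fin p × Fin p, (S q.1 q.2) ^ 2 := by
  have hsym : ∀ i j, S j i = S i j := fun i j => by
    have := congrFun (congrFun hS.eq i) j
    simpa [Matrix.conjTranspose_apply] using this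
  calc (S * S).trace = ∑ i : Fin p, ∑ j : Fin p, S i j * S j i := by
        simp [Matrix.trace, Matrix.mul_apply]
    _ = _ := by
        rw [← Finset.sum_product']
        rw [show (Finset.univ ×ˢ Finset.univ : Finset (Fin p × Fin p)) = Finset.univ from
          Finset.univ_product_univ]
        exact Finset.sum_congr rfl fun q _ => by rw [hsym q.2 q.1, sq]

lemma trace_sq_nonneg {p : ℕ} {S : Matrix (Fin p) (Fin p) ℝ} (hS : S.IsHermitian) :
    0 ≤ (S * S).trace := by
  rw [trace_sq_eq hS]
  positivity

lemma trace_mul_psd_nonneg {p : ℕ} {S T : Matrix (Fin p) (Fin p) ℝ}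
    (hS : S.PosSemidef) (hT : T.PosSemidef) : 0 ≤ (S * T).trace := by
  have hB := hT.posSemidef_sqrt
  have h1 : S * T = S * (hT.sqrt * hT.sqrt) := by rw [hT.sqrt_mul_self]
  rw [h1, ← Matrix.mul_assoc, Matrix.trace_mul_cycle]
  have := (hS.conjTranspose_mul_mul_same hT.sqrt)
  rw [hB.1.eq] at this
  -- this : PosSemidef (hT.sqrt * S * hT.sqrt)
  calc (0:ℝ) ≤ ∑ i, (hT.sqrt * S * hT.sqrt) i i := by
        apply Finset.sum_nonneg
        intro i _
        have h := this.dotProduct_mulVec_nonneg (Pi.single i 1)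
        simpa [Matrix.mulVec, dotProduct, Pi.single_apply] using h
    _ = _ := rfl

lemma key {p : ℕ} {S : Matrix (Fin p) (Fin p) ℝ} (hS : S.PosSemidef)
    (μ : Fin p → ℝ) :
    μ ⬝ᵥ (S *ᵥ μ) ≤ (μ ⬝ᵥ μ) * Real.sqrt ((S * S).trace) := by
  set t := μ ⬝ᵥ (S *ᵥ μ) with ht
  have ht0 : 0 ≤ t := dot_psd_nonneg hS μ
  have hΔ0 : 0 ≤ μ ⬝ᵥ μ := by
    simp only [dotProduct, ← sq]
    positivity
  have hteq : t = ∑ q : Fin p × Fin p, S q.1 q.2 * (μ q.1 * μ q.2) := by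
    rw [ht]
    simp only [dotProduct, Matrix.mulVec, Finset.mul_sum, Finset.sum_mul,
      ← Finset.sum_product']
    apply Finset.sum_congr rfl
    intro q _
    ring
  have hcs := Finset.sum_mul_sq_le_sq_mul_sq Finset.univ
    (fun q : Fin p × Fin p => S q.1 q.2) (fun q => μ q.1 * μ q.2)
  have hg : (∑ q : Fin p × Fin p, (μ q.1 * μ q.2) ^ 2) = (μ ⬝ᵥ μ) ^ 2 := by
    simp only [dotProduct, sq, Finset.sum_mul_sum, ← Finset.sum_product']
    rw [show (Finset.univ ×ˢ Finset.univ : Finset (Fin p × Fin p)) = Finset.univ from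
      Finset.univ_product_univ]
    exact Finset.sum_congr rfl fun q _ => by ring
  have h2 : t ^ 2 ≤ (S * S).trace * (μ ⬝ᵥ μ) ^ 2 := by
    rw [hteq, trace_sq_eq hS.1]
    calc _ ≤ _ := hcs
    _ = _ := by rw [hg]
  calc t = Real.sqrt (t ^ 2) := by rw [Real.sqrt_sq ht0]
    _ ≤ Real.sqrt ((S * S).trace * (μ ⬝ᵥ μ) ^ 2) := Real.sqrt_le_sqrt h2
    _ = (μ ⬝ᵥ μ) * Real.sqrt ((S * S).trace) := by
        rw [Real.sqrt_mul (trace_sq_nonneg hS.1), Real.sqrt_sq hΔ0]; ring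

set_option maxHeartbeats 1000000 in
/-- `K₂(A) ≤ 8 Δ(A) √(K₁(A))`, and consequently
`K₁(A)/K₂(A) ≥ √(K₁(A))/(8Δ(A))` (when `Δ(A) > 0` and `K₂(A) > 0`). -/
theorem K2_le_and_K1_div_K2_ge
    (p : ℕ) (n₁ n₂ : ℝ) (hn₁ : 2 ≤ n₁) (hn₂ : 2 ≤ n₂)
    (A Sig₁ Sig₂ : Matrix (Fin p) (Fin p) ℝ)
    (hA : A.PosSemidef) (hSig₁ : Sig₁.PosSemidef) (hSig₂ : Sig₂.PosSemidef)
    (μ₁ μ₂ : Fin p → ℝ) :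
    let μA : Fin p → ℝ := hA.sqrt *ᵥ (μ₁ - μ₂)
    let S₁ : Matrix (Fin p) (Fin p) ℝ := hA.sqrt * Sig₁ * hA.sqrt
    let S₂ : Matrix (Fin p) (Fin p) ℝ := hA.sqrt * Sig₂ * hA.sqrt
    let Δ : ℝ := μA ⬝ᵥ μA
    let K₁ : ℝ := 2 * ((S₁ * S₁).trace / (n₁ * (n₁ - 1)) + (S₂ * S₂).trace / (n₂ * (n₂ - 1)))
      + 4 * (S₁ * S₂).trace / (n₁ * n₂)
    let K₂ : ℝ := 4 * ((μA ⬝ᵥ (S₁ *ᵥ μA)) / n₁ + (μA ⬝ᵥ (S₂ *ᵥ μA)) / n₂)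
    K₂ ≤ 8 * Δ * Real.sqrt K₁ ∧
      (0 < Δ → 0 < K₂ → Real.sqrt K₁ / (8 * Δ) ≤ K₁ / K₂) := by
  intro μA S₁ S₂ Δ K₁ K₂
  have hn₁0 : (0:ℝ) < n₁ := by linarith
  have hn₂0 : (0:ℝ) < n₂ := by linarith
  have hn₁1 : (0:ℝ) < n₁ - 1 := by linarith
  have hn₂1 : (0:ℝ) < n₂ - 1 := by linarith
  have hsqrtH := hA.posSemidef_sqrt.1
  have hS₁ : S₁.PosSemidef := by
    have := hSig₁.conjTranspose_mul_mul_same hA.sqrt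
    rwa [hsqrtH.eq] at this
  have hS₂ : S₂.PosSemidef := by
    have := hSig₂.conjTranspose_mul_mul_same hA.sqrt
    rwa [hsqrtH.eq] at this
  have hΔ0 : 0 ≤ Δ := by
    show (0:ℝ) ≤ μA ⬝ᵥ μA
    simp only [dotProduct, ← sq]
    positivity
  have hT1 : 0 ≤ (S₁ * S₁).trace := trace_sq_nonneg hS₁.1
  have hT2 : 0 ≤ (S₂ * S₂).trace := trace_sq_nonneg hS₂.1
  have hT12 : 0 ≤ (S₁ * S₂).trace := trace_mul_psd_nonneg hS₁ hS₂
  have hK₁0 : 0 ≤ K₁ := by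
    show (0:ℝ) ≤ 2 * ((S₁ * S₁).trace / (n₁ * (n₁ - 1)) + (S₂ * S₂).trace / (n₂ * (n₂ - 1)))
      + 4 * (S₁ * S₂).trace / (n₁ * n₂)
    positivity
  have key1 : ∀ (T T' c : ℝ), 0 ≤ T → 0 ≤ T' → 0 ≤ c →
      T ≤ n₁ * n₁ * (2 * (T / (n₁ * (n₁ - 1)) + T' / (n₂ * (n₂ - 1))) + c) := by
    intro T T' c hT hT' hc
    have h1 : T / (n₁ * n₁) ≤ 2 * (T / (n₁ * (n₁ - 1))) := by
      rw [← mul_div_assoc, div_le_div_iff₀ (by positivity) (by positivity)]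
      nlinarith
    have h2 : 0 ≤ T' / (n₂ * (n₂ - 1)) := by positivity
    have h3 : T / (n₁ * n₁) ≤ 2 * (T / (n₁ * (n₁ - 1)) + T' / (n₂ * (n₂ - 1))) + c := by
      linarith
    rw [div_le_iff₀ (by positivity)] at h3
    exact h3.trans_eq (mul_comm _ _)
  have key2 : ∀ (T T' c : ℝ), 0 ≤ T → 0 ≤ T' → 0 ≤ c →
      T ≤ n₂ * n₂ * (2 * (T' / (n₁ * (n₁ - 1)) + T / (n₂ * (n₂ - 1))) + c) := by
    intro T T' c hT hT' hc
    have h1 : T / (n₂ * n₂) ≤ 2 * (T / (n₂ * (n₂ - 1))) := by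
      rw [← mul_div_assoc, div_le_div_iff₀ (by positivity) (by positivity)]
      nlinarith
    have h2 : 0 ≤ T' / (n₁ * (n₁ - 1)) := by positivity
    have h3 : T / (n₂ * n₂) ≤ 2 * (T' / (n₁ * (n₁ - 1)) + T / (n₂ * (n₂ - 1))) + c := by
      linarith
    rw [div_le_iff₀ (by positivity)] at h3
    exact h3.trans_eq (mul_comm _ _)
  have hb1 : (S₁ * S₁).trace ≤ n₁ * n₁ * K₁ :=
    key1 _ _ _ hT1 hT2 (by positivity)
  have hb2 : (S₂ * S₂).trace ≤ n₂ * n₂ * K₁ :=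
    key2 _ _ _ hT2 hT1 (by positivity)
  have hs1 : Real.sqrt ((S₁ * S₁).trace) ≤ n₁ * Real.sqrt K₁ := by
    calc Real.sqrt ((S₁ * S₁).trace) ≤ Real.sqrt (n₁ * n₁ * K₁) := Real.sqrt_le_sqrt hb1
      _ = n₁ * Real.sqrt K₁ := by
          rw [Real.sqrt_mul (by positivity), Real.sqrt_mul_self hn₁0.le]
  have hs2 : Real.sqrt ((S₂ * S₂).trace) ≤ n₂ * Real.sqrt K₁ := by
    calc Real.sqrt ((S₂ * S₂).trace) ≤ Real.sqrt (n₂ * n₂ * K₁) := Real.sqrt_le_sqrt hb2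
      _ = n₂ * Real.sqrt K₁ := by
          rw [Real.sqrt_mul (by positivity), Real.sqrt_mul_self hn₂0.le]
  have ht1 : μA ⬝ᵥ (S₁ *ᵥ μA) ≤ Δ * (n₁ * Real.sqrt K₁) :=
    (key hS₁ μA).trans (mul_le_mul_of_nonneg_left hs1 hΔ0)
  have ht2 : μA ⬝ᵥ (S₂ *ᵥ μA) ≤ Δ * (n₂ * Real.sqrt K₁) :=
    (key hS₂ μA).trans (mul_le_mul_of_nonneg_left hs2 hΔ0)
  have hd1 : (μA ⬝ᵥ (S₁ *ᵥ μA)) / n₁ ≤ Δ * Real.sqrt K₁ := by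
    rw [div_le_iff₀ hn₁0]; nlinarith
  have hd2 : (μA ⬝ᵥ (S₂ *ᵥ μA)) / n₂ ≤ Δ * Real.sqrt K₁ := by
    rw [div_le_iff₀ hn₂0]; nlinarith
  have hmain : K₂ ≤ 8 * Δ * Real.sqrt K₁ := by
    show 4 * ((μA ⬝ᵥ (S₁ *ᵥ μA)) / n₁ + (μA ⬝ᵥ (S₂ *ᵥ μA)) / n₂) ≤ 8 * Δ * Real.sqrt K₁
    nlinarith
  refine ⟨hmain, fun hΔ hK₂ => ?_⟩
  rw [div_le_div_iff₀ (by positivity) hK₂]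
  have hsq : Real.sqrt K₁ * Real.sqrt K₁ = K₁ := Real.mul_self_sqrt hK₁0
  nlinarith [Real.sqrt_nonneg K₁]
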